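/- (One-dimensional Gaussian isoperimetric inequality) For any measurable A ⊆ ℝ with standard Gaussian measure γ(A) = Φ(α), and any ε ≥ 0, γ(A_ε) ≥ Φ(α + ε), where A_ε = {x : ∃ a ∈ A, |x - a| ≤ ε}. -/

import Mathlib

open MeasureTheory ProbabilityTheory

noncomputable def stdNormalCDF (t : ℝ) : ℝ :=
  ∫ x in Set.Iic t, Real.exp (-x ^ 2 / 2) / Real.sqrt (2 * Real.pi)

noncomputable def stdNormalCDFInv : ℝ → ℝ := Function.invFun stdNormalCDF

noncomputable def gaussianPi (n : ℕ) (x₀ : EuclideanSpace ℝ (Fin n)) (σ : ℝ) :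
    Measure (EuclideanSpace ℝ (Fin n)) :=
  (Measure.pi fun i => gaussianReal (x₀ i) ⟨σ ^ 2, sq_nonneg σ⟩).map (WithLp.toLp 2)

open Real Set Filter Topology

noncomputable def phi (x : ℝ) : ℝ := Real.exp (-x ^ 2 / 2) / Real.sqrt (2 * Real.pi)

lemma phi_pos (x : ℝ) : 0 < phi x := by
  apply div_pos (Real.exp_pos _)
  have := Real.pi_pos; positivity

lemma phi_nonneg (x : ℝ) : 0 ≤ phi x := (phi_pos x).le

lemma continuous_phi : Continuous phi := by unfold phi; fun_prop

lemma phi_eq (x : ℝ) : phi x = Real.exp (-(1/2) * x ^ 2) * (Real.sqrt (2 * Real.pi))⁻¹ := by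
  unfold phi; rw [div_eq_mul_inv]; ring_nf

lemma phi_neg_arg (x : ℝ) : phi (-x) = phi x := by unfold phi; ring_nf

lemma integrable_phi : Integrable phi := by
  have h : Integrable (fun x : ℝ => Real.exp (-(1/2) * x ^ 2)) :=
    integrable_exp_neg_mul_sq (by norm_num)
  have h2 := h.mul_const (Real.sqrt (2 * Real.pi))⁻¹
  apply h2.congr
  filter_upwards with x
  rw [phi_eq]

lemma integrable_id_phi : Integrable (fun x => x * phi x) := by
  have h : Integrable (fun x : ℝ => x * Real.exp (-(1/2) * x ^ 2)) :=
    integrable_mul_exp_neg_mul_sq (by norm_num)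
  have h2 := h.mul_const (Real.sqrt (2 * Real.pi))⁻¹
  apply h2.congr
  filter_upwards with x
  rw [phi_eq]; ring

lemma phi_eq_gaussianPDFReal (x : ℝ) :
    phi x = ProbabilityTheory.gaussianPDFReal 0 1 x := by
  unfold phi ProbabilityTheory.gaussianPDFReal
  norm_num [div_eq_mul_inv, mul_comm]

lemma integral_phi : ∫ x, phi x = 1 := by
  rw [show (fun x => phi x) = ProbabilityTheory.gaussianPDFReal 0 1 by
    funext x; exact phi_eq_gaussianPDFReal x]
  exact ProbabilityTheory.integral_gaussianPDFReal_eq_one 0 one_ne_zero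

lemma Phi_def (t : ℝ) : stdNormalCDF t = ∫ x in Iic t, phi x := rfl

lemma Phi_sub (a b : ℝ) : stdNormalCDF b - stdNormalCDF a = ∫ x in a..b, phi x := by
  have := intervalIntegral.integral_Iic_sub_Iic (f := phi) (μ := volume) (a := a) (b := b)
    integrable_phi.integrableOn integrable_phi.integrableOn
  rw [Phi_def, Phi_def]
  exact this

lemma Phi_hasDerivAt (t : ℝ) : HasDerivAt stdNormalCDF (phi t) t := by
  have h : ∀ u, stdNormalCDF u = (∫ x in (0:ℝ)..u, phi x) + stdNormalCDF 0 := by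
    intro u; rw [← Phi_sub]; ring
  have : HasDerivAt (fun u => (∫ x in (0:ℝ)..u, phi x) + stdNormalCDF 0) (phi t) t := by
    apply HasDerivAt.add_const
    exact intervalIntegral.integral_hasDerivAt_right
      integrable_phi.intervalIntegrable
      (continuous_phi.stronglyMeasurableAtFilter _ _)
      continuous_phi.continuousAt
  have heq : stdNormalCDF = fun u => (∫ x in (0:ℝ)..u, phi x) + stdNormalCDF 0 := funext h
  rw [heq]
  exact this

lemma Phi_continuous : Continuous stdNormalCDF :=
  continuous_iff_continuousAt.2 fun t => (Phi_hasDerivAt t).continuousAt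

lemma Phi_strictMono : StrictMono stdNormalCDF := by
  intro a b hab
  have h : 0 < ∫ x in a..b, phi x := by
    apply intervalIntegral.intervalIntegral_pos_of_pos_on
      (integrable_phi.intervalIntegrable)
      (fun x _ => phi_pos x) hab
  have := Phi_sub a b
  linarith

lemma Phi_mono : Monotone stdNormalCDF := Phi_strictMono.monotone

lemma Phi_nonneg (t : ℝ) : 0 ≤ stdNormalCDF t := by
  rw [Phi_def]; exact setIntegral_nonneg measurableSet_Iic (fun x _ => phi_nonneg x)

lemma Phi_le_one (t : ℝ) : stdNormalCDF t ≤ 1 := by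
  rw [Phi_def, ← integral_phi]
  exact setIntegral_le_integral integrable_phi (ae_of_all _ (fun x => phi_nonneg x))

lemma Phi_pos (t : ℝ) : 0 < stdNormalCDF t :=
  lt_of_le_of_lt (Phi_nonneg (t - 1)) (Phi_strictMono (by linarith))

lemma Phi_lt_one (t : ℝ) : stdNormalCDF t < 1 :=
  lt_of_lt_of_le (Phi_strictMono (show t < t + 1 by linarith)) (Phi_le_one (t + 1))

lemma Phi_tendsto_atBot : Tendsto stdNormalCDF atBot (𝓝 0) := by
  have h : Tendsto (fun a => ∫ x in a..(0:ℝ), phi x) atBot (𝓝 (∫ x in Iic (0:ℝ), phi x)) :=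
    intervalIntegral_tendsto_integral_Iic 0 integrable_phi.integrableOn tendsto_id
  have h2 : Tendsto (fun a => stdNormalCDF 0 - (∫ x in a..(0:ℝ), phi x)) atBot
      (𝓝 (stdNormalCDF 0 - ∫ x in Iic (0:ℝ), phi x)) := (tendsto_const_nhds).sub h
  rw [← Phi_def, sub_self] at h2
  apply h2.congr
  intro a
  have := Phi_sub a 0
  linarith

lemma Phi_tendsto_atTop : Tendsto stdNormalCDF atTop (𝓝 1) := by
  have h : Tendsto (fun b => ∫ x in (0:ℝ)..b, phi x) atTop (𝓝 (∫ x in Ioi (0:ℝ), phi x)) :=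
    intervalIntegral_tendsto_integral_Ioi 0 integrable_phi.integrableOn tendsto_id
  have h2 : Tendsto (fun b => stdNormalCDF 0 + (∫ x in (0:ℝ)..b, phi x)) atTop
      (𝓝 (stdNormalCDF 0 + ∫ x in Ioi (0:ℝ), phi x)) := (tendsto_const_nhds).add h
  have key : stdNormalCDF 0 + ∫ x in Ioi (0:ℝ), phi x = 1 := by
    rw [Phi_def, ← integral_phi]
    exact intervalIntegral.integral_Iic_add_Ioi integrable_phi.integrableOn integrable_phi.integrableOn
  rw [key] at h2
  apply h2.congr
  intro b
  have := Phi_sub 0 b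
  linarith

lemma Phi_neg (x : ℝ) : stdNormalCDF (-x) = 1 - stdNormalCDF x := by
  have h1 : stdNormalCDF (-x) = ∫ y in Iic (-x), phi (-y) := by
    rw [Phi_def]
    congr 1
    funext y
    rw [phi_neg_arg]
  rw [h1, integral_comp_neg_Iic, neg_neg]
  have h2 : (∫ y in Iic x, phi y) + ∫ y in Ioi x, phi y = 1 := by
    rw [← integral_phi]
    exact intervalIntegral.integral_Iic_add_Ioi integrable_phi.integrableOn integrable_phi.integrableOn
  rw [Phi_def]
  linarith

lemma phi_hasDerivAt (t : ℝ) : HasDerivAt phi (-t * phi t) t := by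
  have h1 : HasDerivAt (fun x : ℝ => -x ^ 2 / 2) (-t) t := by
    have h := (((hasDerivAt_pow 2 t).neg).div_const 2)
    norm_num at h
    refine h.congr_deriv ?_
    ring
  have h2 : HasDerivAt (fun x : ℝ => Real.exp (-x ^ 2 / 2)) (Real.exp (-t ^ 2 / 2) * (-t)) t :=
    h1.exp
  have h3 := h2.div_const (Real.sqrt (2 * Real.pi))
  have : Real.exp (-t ^ 2 / 2) * (-t) / Real.sqrt (2 * Real.pi) = -t * phi t := by
    unfold phi; ring
  rw [this] at h3
  exact h3

lemma sq_tendsto_atBot : Tendsto (fun x : ℝ => x ^ 2) atBot atTop := by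
  have hp : Tendsto (fun x : ℝ => x ^ 2) atTop atTop := tendsto_pow_atTop (by norm_num)
  have h := hp.comp tendsto_abs_atBot_atTop
  apply h.congr
  intro x
  simp [sq_abs]

lemma neg_sq_div_two_tendsto_atBot : Tendsto (fun x : ℝ => -x ^ 2 / 2) atBot atBot := by
  apply Tendsto.atBot_div_const (by norm_num)
  exact tendsto_neg_atTop_atBot.comp sq_tendsto_atBot

lemma phi_tendsto_atBot : Tendsto phi atBot (𝓝 0) := by
  have h2 : Tendsto (fun x : ℝ => Real.exp (-x ^ 2 / 2)) atBot (𝓝 0) :=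
    Real.tendsto_exp_atBot.comp neg_sq_div_two_tendsto_atBot
  have h3 := h2.div_const (Real.sqrt (2 * Real.pi))
  rw [zero_div] at h3
  exact h3

lemma integral_Iic_neg_id_phi (q : ℝ) : ∫ x in Iic q, -x * phi x = phi q := by
  have := integral_Iic_of_hasDerivAt_of_tendsto (f := phi) (f' := fun x => -x * phi x) (a := q)
    (continuous_phi.continuousAt.continuousWithinAt)
    (fun x _ => phi_hasDerivAt x)
    ((integrable_id_phi.neg.congr (by filter_upwards with x; simp [neg_mul])).integrableOn)
    phi_tendsto_atBot
  rw [this]; ring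

lemma integrable_neg_id_phi : Integrable (fun t : ℝ => -t * phi t) := by
  have h := integrable_id_phi.neg
  apply h.congr
  filter_upwards with t
  simp [neg_mul]

lemma mills (x : ℝ) (hx : x < 0) : -x * stdNormalCDF x ≤ phi x := by
  have h1 : ∀ t ∈ Iic x, -x * phi t ≤ -t * phi t := by
    intro t ht
    have : t ≤ x := ht
    nlinarith [phi_pos t]
  have h2 : (∫ t in Iic x, -x * phi t) ≤ ∫ t in Iic x, -t * phi t := by
    apply setIntegral_mono_on
    · exact (integrable_phi.const_mul (-x)).integrableOn
    · exact integrable_neg_id_phi.integrableOn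
    · exact measurableSet_Iic
    · exact h1
  rw [integral_Iic_neg_id_phi] at h2
  rw [MeasureTheory.integral_const_mul, ← Phi_def] at h2
  exact h2

lemma tendsto_mul_Phi_atBot : Tendsto (fun x => x * stdNormalCDF x) atBot (𝓝 0) := by
  have hb : ∀ᶠ x in (atBot : Filter ℝ), -phi x ≤ x * stdNormalCDF x := by
    filter_upwards [eventually_lt_atBot (0:ℝ)] with x hx
    have := mills x hx
    linarith
  have ht : ∀ᶠ x in (atBot : Filter ℝ), x * stdNormalCDF x ≤ 0 := by
    filter_upwards [eventually_lt_atBot (0:ℝ)] with x hx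
    exact mul_nonpos_of_nonpos_of_nonneg hx.le (Phi_nonneg x)
  have h0 : Tendsto (fun x : ℝ => -phi x) atBot (𝓝 0) := by
    simpa using phi_tendsto_atBot.neg
  exact tendsto_of_tendsto_of_tendsto_of_le_of_le' h0 tendsto_const_nhds hb ht

lemma hfun_hasDerivAt (x : ℝ) :
    HasDerivAt (fun y => phi y + y * stdNormalCDF y) (stdNormalCDF x) x := by
  have h1 := (phi_hasDerivAt x).add (((hasDerivAt_id x).mul (Phi_hasDerivAt x)))
  simp only [id_eq] at h1
  refine h1.congr_deriv ?_
  ring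

lemma hfun_nonneg (x : ℝ) : 0 ≤ phi x + x * stdNormalCDF x := by
  have hmono : StrictMono (fun y => phi y + y * stdNormalCDF y) := by
    apply strictMono_of_deriv_pos
    intro y
    rw [(hfun_hasDerivAt y).deriv]
    exact Phi_pos y
  have hlim : Tendsto (fun y => phi y + y * stdNormalCDF y) atBot (𝓝 0) := by
    simpa using phi_tendsto_atBot.add tendsto_mul_Phi_atBot
  have hev : ∀ᶠ y in (atBot : Filter ℝ), phi y + y * stdNormalCDF y ≤ phi x + x * stdNormalCDF x := by
    filter_upwards [eventually_le_atBot x] with y hy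
    exact hmono.monotone hy
  exact le_of_tendsto hlim hev

lemma k_lemma {x ε : ℝ} (hε : 0 ≤ ε) :
    phi (x + ε) * stdNormalCDF x ≤ phi x * stdNormalCDF (x + ε) := by
  set K : ℝ → ℝ := fun s => phi x * stdNormalCDF (x + s) - phi (x + s) * stdNormalCDF x with hK
  have hderiv : ∀ s, HasDerivAt K (phi (x + s) * (phi x + (x + s) * stdNormalCDF x)) s := by
    intro s
    have h1 : HasDerivAt (fun s : ℝ => x + s) 1 s := by
      simpa using (hasDerivAt_id s).const_add x
    have h2 : HasDerivAt (fun s => stdNormalCDF (x + s)) (phi (x + s)) s := by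
      have := (Phi_hasDerivAt (x + s)).comp s h1
      rw [mul_one] at this
      exact this
    have h3 : HasDerivAt (fun s => phi (x + s)) (-(x + s) * phi (x + s)) s := by
      have := (phi_hasDerivAt (x + s)).comp s h1
      rw [mul_one] at this
      exact this
    have h4 := ((h2.const_mul (phi x)).sub (h3.mul_const (stdNormalCDF x)))
    refine h4.congr_deriv ?_
    ring
  have hmono : MonotoneOn K (Ici 0) := by
    apply monotoneOn_of_deriv_nonneg (convex_Ici 0)
    · apply Continuous.continuousOn
      apply Continuous.sub
      · exact continuous_const.mul (Phi_continuous.comp (continuous_const.add continuous_id))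
      · exact (continuous_phi.comp (continuous_const.add continuous_id)).mul continuous_const
    · intro s _
      exact (hderiv s).differentiableAt.differentiableWithinAt
    · intro s hs
      rw [(hderiv s).deriv]
      have hs0 : 0 ≤ s := le_of_lt (by simpa using hs)
      have : 0 ≤ phi x + (x + s) * stdNormalCDF x := by
        have h5 := hfun_nonneg x
        nlinarith [Phi_nonneg x, phi_pos (x+s)]
      exact mul_nonneg (phi_nonneg _) this
  have h0 : K 0 = 0 := by simp [hK]
  have := hmono (self_mem_Ici) (show ε ∈ Ici (0:ℝ) from hε) hε
  rw [h0] at this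
  simp only [hK] at this
  linarith

lemma ratio_lemma {t s ε : ℝ} (hts : t ≤ s) (hε : 0 ≤ ε) :
    stdNormalCDF t * stdNormalCDF (s + ε) ≤ stdNormalCDF (t + ε) * stdNormalCDF s := by
  set F : ℝ → ℝ := fun x => stdNormalCDF (x + ε) / stdNormalCDF x with hF
  have hderiv : ∀ x, HasDerivAt F ((phi (x + ε) * stdNormalCDF x -
      stdNormalCDF (x + ε) * phi x) / (stdNormalCDF x) ^ 2) x := by
    intro x
    have h1 : HasDerivAt (fun x : ℝ => x + ε) 1 x := by simpa using (hasDerivAt_id x).add_const ε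
    have h2 : HasDerivAt (fun x => stdNormalCDF (x + ε)) (phi (x + ε)) x := by
      have := (Phi_hasDerivAt (x + ε)).comp x h1
      rw [mul_one] at this
      exact this
    exact h2.div (Phi_hasDerivAt x) (ne_of_gt (Phi_pos x))
  have hanti : Antitone F := by
    apply antitone_of_deriv_nonpos
    · intro x
      exact (hderiv x).differentiableAt
    · intro x
      rw [(hderiv x).deriv]
      apply div_nonpos_of_nonpos_of_nonneg
      · have := k_lemma (x := x) hε
        linarith
      · positivity
  have h := hanti hts
  rw [hF] at h
  simp only at h
  rw [div_le_div_iff₀ (Phi_pos s) (Phi_pos t)] at h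
  linarith

lemma phi_sub_phi (p r : ℝ) : phi r - phi p = ∫ t in p..r, -t * phi t := by
  exact (intervalIntegral.integral_eq_sub_of_hasDerivAt (fun t _ => phi_hasDerivAt t)
    integrable_neg_id_phi.intervalIntegrable).symm

lemma interval_phi_pos {a b : ℝ} (hab : a < b) : 0 < ∫ t in a..b, phi t :=
  intervalIntegral.intervalIntegral_pos_of_pos_on integrable_phi.intervalIntegrable
    (fun x _ => phi_pos x) hab

-- upper bound: for a < b, ∫ a..b, -t*phi t < (-a) * ∫ a..b phi
lemma interval_neg_id_lt {a b : ℝ} (hab : a < b) :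
    (∫ t in a..b, -t * phi t) < -a * ∫ t in a..b, phi t := by
  set m := (a + b) / 2 with hm
  have ham : a < m := by rw [hm]; linarith
  have hmb : m < b := by rw [hm]; linarith
  have hsplit : (∫ t in a..b, -t * phi t) =
      (∫ t in a..m, -t * phi t) + ∫ t in m..b, -t * phi t := by
    rw [intervalIntegral.integral_add_adjacent_intervals] <;>
      exact integrable_neg_id_phi.intervalIntegrable
  have hsplit2 : (∫ t in a..b, phi t) = (∫ t in a..m, phi t) + ∫ t in m..b, phi t := by
    rw [intervalIntegral.integral_add_adjacent_intervals] <;>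
      exact integrable_phi.intervalIntegrable
  have h1 : (∫ t in a..m, -t * phi t) ≤ ∫ t in a..m, -a * phi t := by
    apply intervalIntegral.integral_mono_on ham.le
      integrable_neg_id_phi.intervalIntegrable
      ((integrable_phi.const_mul (-a)).intervalIntegrable)
    intro t ht
    have : a ≤ t := ht.1
    nlinarith [phi_pos t]
  have h2 : (∫ t in m..b, -t * phi t) ≤ ∫ t in m..b, -m * phi t := by
    apply intervalIntegral.integral_mono_on hmb.le
      integrable_neg_id_phi.intervalIntegrable
      ((integrable_phi.const_mul (-m)).intervalIntegrable)
    intro t ht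
    have : m ≤ t := ht.1
    nlinarith [phi_pos t]
  have h3 : (∫ t in m..b, -m * phi t) < ∫ t in m..b, -a * phi t := by
    rw [intervalIntegral.integral_const_mul, intervalIntegral.integral_const_mul]
    have := interval_phi_pos hmb
    nlinarith
  have h4 : (∫ t in a..m, -a * phi t) = -a * ∫ t in a..m, phi t :=
    intervalIntegral.integral_const_mul _ _
  have h5 : (∫ t in m..b, -a * phi t) = -a * ∫ t in m..b, phi t :=
    intervalIntegral.integral_const_mul _ _
  rw [hsplit, hsplit2]
  rw [h4] at h1
  rw [h5] at h3
  have h2' := h2.trans_lt h3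
  linarith

-- lower bound: ∫ Iic q, -t*phi t ≥ (-q) * ∫ Iic q phi  (i.e. ≥ -q * Phi q)
lemma Iic_neg_id_ge (q : ℝ) : -q * stdNormalCDF q ≤ ∫ t in Iic q, -t * phi t := by
  have h : (∫ t in Iic q, -q * phi t) ≤ ∫ t in Iic q, -t * phi t := by
    apply setIntegral_mono_on
    · exact (integrable_phi.const_mul (-q)).integrableOn
    · exact integrable_neg_id_phi.integrableOn
    · exact measurableSet_Iic
    · intro t ht
      have : t ≤ q := ht
      nlinarith [phi_pos t]
  rw [MeasureTheory.integral_const_mul, ← Phi_def] at h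
  exact h

theorem factA {p q r : ℝ} (h : stdNormalCDF r = stdNormalCDF p + stdNormalCDF q) :
    phi r < phi p + phi q := by
  have hpr : p < r := by
    have := Phi_pos q
    have : stdNormalCDF p < stdNormalCDF r := by linarith
    exact Phi_strictMono.lt_iff_lt.mp this
  have hqr : q < r := by
    have := Phi_pos p
    have : stdNormalCDF q < stdNormalCDF r := by linarith
    exact Phi_strictMono.lt_iff_lt.mp this
  have hmass : (∫ t in p..r, phi t) = stdNormalCDF q := by rw [← Phi_sub]; linarith
  have hA : phi r - phi p = ∫ t in p..r, -t * phi t := phi_sub_phi p r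
  have hB : phi q = ∫ t in Iic q, -t * phi t := (integral_Iic_neg_id_phi q).symm
  rcases le_or_gt q p with hpq | hpq
  · -- q ≤ p
    have h1 := interval_neg_id_lt hpr
    rw [hmass] at h1
    have h2 := Iic_neg_id_ge q
    have h3 : -p * stdNormalCDF q ≤ -q * stdNormalCDF q := by
      nlinarith [Phi_pos q]
    rw [← hB] at h2
    linarith
  · -- p < q
    have hq_lt_r : q < r := hqr
    have hsplit : (∫ t in p..r, -t * phi t) =
        (∫ t in p..q, -t * phi t) + ∫ t in q..r, -t * phi t := by
      rw [intervalIntegral.integral_add_adjacent_intervals] <;>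
        exact integrable_neg_id_phi.intervalIntegrable
    have hsplit2 : (∫ t in Iic q, -t * phi t) =
        (∫ t in Iic p, -t * phi t) + ∫ t in p..q, -t * phi t := by
      have := intervalIntegral.integral_Iic_sub_Iic (f := fun t => -t * phi t) (μ := volume)
        (a := p) (b := q) integrable_neg_id_phi.integrableOn integrable_neg_id_phi.integrableOn
      linarith
    have hmass2 : (∫ t in q..r, phi t) = stdNormalCDF p := by
      have := Phi_sub q r; linarith
    have h1 := interval_neg_id_lt hq_lt_r
    rw [hmass2] at h1
    have h2 := Iic_neg_id_ge p
    have h3 : -q * stdNormalCDF p < -p * stdNormalCDF p := by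
      nlinarith [Phi_pos p]
    linarith

theorem factA' {p q r : ℝ} (h : stdNormalCDF r = stdNormalCDF p + stdNormalCDF q) :
    phi q < phi p + phi r := by
  have hrefl : stdNormalCDF (-q) = stdNormalCDF p + stdNormalCDF (-r) := by
    rw [Phi_neg, Phi_neg]; linarith
  have := factA hrefl
  rwa [phi_neg_arg, phi_neg_arg] at this

theorem crossing {a β b : ℝ} (h : stdNormalCDF a + stdNormalCDF β ≤ stdNormalCDF b)
    {ε : ℝ} (hε : 0 ≤ ε) :
    stdNormalCDF (a - ε) + stdNormalCDF (β + ε) ≤ stdNormalCDF (b + ε) := by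
  set g : ℝ → ℝ := fun s => stdNormalCDF (b + s) - stdNormalCDF (a - s) - stdNormalCDF (β + s)
    with hg
  have hgderiv : ∀ s, HasDerivAt g (phi (b + s) + phi (a - s) - phi (β + s)) s := by
    intro s
    have h1 : HasDerivAt (fun s : ℝ => b + s) 1 s := by simpa using (hasDerivAt_id s).const_add b
    have h2 : HasDerivAt (fun s : ℝ => a - s) (-1) s := by
      exact ((hasDerivAt_id s).const_sub a)
    have h3 : HasDerivAt (fun s : ℝ => β + s) 1 s := by simpa using (hasDerivAt_id s).const_add β
    have d1 : HasDerivAt (fun s => stdNormalCDF (b + s)) (phi (b + s)) s := by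
      have := (Phi_hasDerivAt (b + s)).comp s h1
      rw [mul_one] at this
      exact this
    have d2 : HasDerivAt (fun s => stdNormalCDF (a - s)) (-phi (a - s)) s := by
      have := (Phi_hasDerivAt (a - s)).comp s h2
      rw [mul_neg_one] at this
      exact this
    have d3 : HasDerivAt (fun s => stdNormalCDF (β + s)) (phi (β + s)) s := by
      have := (Phi_hasDerivAt (β + s)).comp s h3
      rw [mul_one] at this
      exact this
    have := (d1.sub d2).sub d3
    refine this.congr_deriv ?_
    ring
  have hgcont : Continuous g := by
    apply Continuous.sub
    apply Continuous.sub
    · exact Phi_continuous.comp (continuous_const.add continuous_id)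
    · exact Phi_continuous.comp (continuous_const.sub continuous_id)
    · exact Phi_continuous.comp (continuous_const.add continuous_id)
  have hg0 : 0 ≤ g 0 := by simp [hg]; linarith
  -- key: at any zero of g, the derivative is strictly positive
  have hkey : ∀ s, g s = 0 → 0 < phi (b + s) + phi (a - s) - phi (β + s) := by
    intro s hs
    have hrel : stdNormalCDF (b + s) = stdNormalCDF (a - s) + stdNormalCDF (β + s) := by
      simp only [hg] at hs; linarith
    have := factA' (p := a - s) (q := β + s) (r := b + s) hrel
    linarith
  -- show ∀ s ≥ 0, 0 ≤ g s
  have main : ∀ s, 0 ≤ s → 0 ≤ g s := by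
    intro s₁ hs₁
    by_contra hneg
    push_neg at hneg
    set S : Set ℝ := {s | s ∈ Icc 0 s₁ ∧ g s < 0} with hS
    have hSne : S.Nonempty := ⟨s₁, ⟨hs₁, le_refl _⟩, hneg⟩
    have hSbdd : BddBelow S := ⟨0, fun s hs => hs.1.1⟩
    set ε₀ := sInf S with hε₀
    have hε₀mem : ε₀ ∈ closure S := csInf_mem_closure hSne hSbdd
    have hε₀Icc : ε₀ ∈ Icc 0 s₁ := by
      have : closure S ⊆ Icc 0 s₁ :=
        closure_minimal (fun s hs => hs.1) isClosed_Icc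
      exact this hε₀mem
    have hgε₀_le : g ε₀ ≤ 0 := by
      have : closure S ⊆ {s | g s ≤ 0} :=
        closure_minimal (fun s hs => le_of_lt hs.2) (isClosed_le hgcont continuous_const)
      exact this hε₀mem
    have hgε₀_ge : 0 ≤ g ε₀ := by
      rcases eq_or_lt_of_le hε₀Icc.1 with heq | hlt
      · rw [← heq]; exact hg0
      · -- ε₀ > 0 : left limit of nonneg values
        have hev : ∀ᶠ s in 𝓝[<] ε₀, 0 ≤ g s := by
          have hIoo : Ioo 0 ε₀ ∈ 𝓝[<] ε₀ := Ioo_mem_nhdsLT_of_mem ⟨hlt, le_refl _⟩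
          filter_upwards [hIoo] with s hs
          by_contra hc
          push_neg at hc
          have hsS : s ∈ S := ⟨⟨hs.1.le, hs.2.le.trans hε₀Icc.2⟩, hc⟩
          have := csInf_le hSbdd hsS
          exact absurd this (not_le.mpr hs.2)
        have htend : Tendsto g (𝓝[<] ε₀) (𝓝 (g ε₀)) :=
          (hgcont.continuousAt.tendsto).mono_left nhdsWithin_le_nhds
        exact ge_of_tendsto htend hev
    have hgε₀ : g ε₀ = 0 := le_antisymm hgε₀_le hgε₀_ge
    have hd := hkey ε₀ hgε₀
    -- slope positive on right neighborhoods
    have hslope : Tendsto (slope g ε₀) (𝓝[≠] ε₀) (𝓝 (phi (b + ε₀) + phi (a - ε₀) - phi (β + ε₀))) :=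
      hasDerivAt_iff_tendsto_slope.mp (hgderiv ε₀)
    have hslope_pos : ∀ᶠ s in 𝓝[>] ε₀, 0 < slope g ε₀ s := by
      have : ∀ᶠ s in 𝓝[≠] ε₀, 0 < slope g ε₀ s :=
        hslope.eventually (eventually_gt_nhds hd)
      exact this.filter_mono (nhdsWithin_mono _ (fun s hs => ne_of_gt hs))
    have hgpos : ∀ᶠ s in 𝓝[>] ε₀, 0 < g s := by
      filter_upwards [hslope_pos, self_mem_nhdsWithin] with s hs hs'
      have hsgt : ε₀ < s := hs'
      have h1 : 0 < (g s - g ε₀) / (s - ε₀) := by rwa [slope_def_field] at hs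
      have hspos : 0 < s - ε₀ := sub_pos.mpr hsgt
      have h2 : 0 < g s - g ε₀ := by
        by_contra hc
        push_neg at hc
        have : (g s - g ε₀) / (s - ε₀) ≤ 0 := div_nonpos_of_nonpos_of_nonneg hc hspos.le
        linarith
      linarith [hgε₀ ▸ h2]
    rcases mem_nhdsGT_iff_exists_Ioo_subset.mp hgpos with ⟨u, hu, hsub⟩
    have hε₀u : ε₀ < u := by simpa using hu
    have hε₀s₁ : ε₀ < s₁ := by
      rcases eq_or_lt_of_le hε₀Icc.2 with heq | hlt
      · exfalso; rw [heq] at hgε₀; linarith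
      · exact hlt
    have hlt2 : sInf S < min u s₁ := lt_min hε₀u hε₀s₁
    rcases (csInf_lt_iff hSbdd hSne).mp hlt2 with ⟨s, hsS, hslt⟩
    have hge : ε₀ ≤ s := csInf_le hSbdd hsS
    have hne : s ≠ ε₀ := by
      intro hcontra
      rw [hcontra] at hsS
      exact absurd hgε₀ (ne_of_lt hsS.2)
    have hsIoo : s ∈ Ioo ε₀ u := ⟨lt_of_le_of_ne hge (Ne.symm hne), hslt.trans_le (min_le_left _ _)⟩
    have := hsub hsIoo
    rw [mem_setOf_eq] at this
    exact absurd hsS.2 (not_lt.mpr this.le)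
  have := main ε hε
  simp only [hg] at this
  linarith

lemma Phi_surj {v : ℝ} (h0 : 0 < v) (h1 : v < 1) : ∃ β, stdNormalCDF β = v := by
  obtain ⟨x, hx⟩ := (Phi_tendsto_atBot.eventually_lt_const h0).exists
  obtain ⟨y, hy⟩ := (Phi_tendsto_atTop.eventually_const_lt h1).exists
  have hxy : x ≤ y := by
    by_contra hc
    push_neg at hc
    have := Phi_strictMono hc
    linarith
  have := intermediate_value_Icc hxy Phi_continuous.continuousOn
  have hv : v ∈ Icc (stdNormalCDF x) (stdNormalCDF y) := ⟨hx.le, hy.le⟩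
  obtain ⟨β, _, hβ⟩ := this hv
  exact ⟨β, hβ⟩

theorem key_Ioo {α ε c d w : ℝ} (hε : 0 ≤ ε) (hw0 : 0 ≤ w) (hwa : w ≤ stdNormalCDF α)
    (hwcd : w ≤ stdNormalCDF (d - ε) - stdNormalCDF (c + ε)) :
    w * stdNormalCDF (α + ε) ≤ stdNormalCDF α * (stdNormalCDF d - stdNormalCDF c) := by
  rcases eq_or_lt_of_le hw0 with heq | hwpos
  · -- w = 0
    rw [← heq]
    have hcd : c ≤ d := by
      have h2 : stdNormalCDF (c + ε) ≤ stdNormalCDF (d - ε) := by linarith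
      have := Phi_strictMono.le_iff_le.mp h2
      linarith
    have := Phi_mono hcd
    nlinarith [Phi_pos α]
  · have hw1 : w < 1 := lt_of_le_of_lt hwa (Phi_lt_one α)
    obtain ⟨β, hβ⟩ := Phi_surj hwpos hw1
    have hcross : stdNormalCDF ((c + ε) - ε) + stdNormalCDF (β + ε) ≤ stdNormalCDF ((d - ε) + ε) := by
      apply crossing _ hε
      rw [hβ]; linarith
    have hc' : (c + ε) - ε = c := by ring
    have hd' : (d - ε) + ε = d := by ring
    rw [hc', hd'] at hcross
    have hβα : β ≤ α := Phi_strictMono.le_iff_le.mp (by rw [hβ]; exact hwa)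
    have hratio := ratio_lemma hβα hε
    rw [hβ] at hratio
    nlinarith [Phi_pos α, Phi_nonneg (α + ε), Phi_nonneg (β + ε)]

theorem key_Iio {α ε d w : ℝ} (hε : 0 ≤ ε) (hw0 : 0 ≤ w) (hwa : w ≤ stdNormalCDF α)
    (hwd : w ≤ stdNormalCDF (d - ε)) :
    w * stdNormalCDF (α + ε) ≤ stdNormalCDF α * stdNormalCDF d := by
  rcases le_or_gt (d - ε) α with hcase | hcase
  · have hratio := ratio_lemma hcase hε
    have hd' : (d - ε) + ε = d := by ring
    rw [hd'] at hratio
    nlinarith [Phi_nonneg (α + ε), Phi_pos (d - ε)]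
  · have h1 : α + ε ≤ d := by linarith
    have := Phi_mono h1
    nlinarith [Phi_pos α, Phi_nonneg (α + ε)]

theorem key_Ioi {α ε c w : ℝ} (hε : 0 ≤ ε) (hw0 : 0 ≤ w) (hwa : w ≤ stdNormalCDF α)
    (hwc : w ≤ 1 - stdNormalCDF (c + ε)) :
    w * stdNormalCDF (α + ε) ≤ stdNormalCDF α * (1 - stdNormalCDF c) := by
  have h1 : 1 - stdNormalCDF (c + ε) = stdNormalCDF (-c - ε) := by
    rw [show -c - ε = -(c + ε) by ring, Phi_neg]
  have h2 : 1 - stdNormalCDF c = stdNormalCDF (-c) := (Phi_neg c).symm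
  rw [h2]
  apply key_Iio hε hw0 hwa
  rw [show -c - ε = (-c) - ε by ring] at h1
  linarith

theorem key_univ {α ε w : ℝ} (hw0 : 0 ≤ w) (hwa : w ≤ stdNormalCDF α) :
    w * stdNormalCDF (α + ε) ≤ stdNormalCDF α * 1 := by
  nlinarith [Phi_le_one (α + ε), Phi_nonneg (α + ε), Phi_pos α]

lemma gamma_eq (s : Set ℝ) :
    gaussianReal 0 1 s = ENNReal.ofReal (∫ x in s, phi x) := by
  rw [gaussianReal_apply_eq_integral 0 one_ne_zero s]
  congr 1
  exact integral_congr_ae (ae_of_all _ fun x => (phi_eq_gaussianPDFReal x).symm)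

lemma gamma_Iic (t : ℝ) : gaussianReal 0 1 (Iic t) = ENNReal.ofReal (stdNormalCDF t) := by
  rw [gamma_eq, ← Phi_def]

lemma gamma_univ : gaussianReal 0 1 (univ : Set ℝ) = 1 := measure_univ

lemma gamma_ne_top (s : Set ℝ) : gaussianReal 0 1 s ≠ ⊤ := measure_ne_top _ s

lemma integral_Ioo_phi {c d : ℝ} (h : c ≤ d) :
    ∫ x in Ioo c d, phi x = stdNormalCDF d - stdNormalCDF c := by
  rw [← integral_Ioc_eq_integral_Ioo, ← intervalIntegral.integral_of_le h, ← Phi_sub]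

lemma gamma_Ioo {c d : ℝ} (h : c ≤ d) :
    gaussianReal 0 1 (Ioo c d) = ENNReal.ofReal (stdNormalCDF d - stdNormalCDF c) := by
  rw [gamma_eq, integral_Ioo_phi h]

lemma gamma_Icc_le (c d : ℝ) :
    gaussianReal 0 1 (Icc c d) ≤ ENNReal.ofReal (stdNormalCDF d - stdNormalCDF c) := by
  rcases le_or_gt c d with h | h
  · rw [gamma_eq, integral_Icc_eq_integral_Ioc, ← intervalIntegral.integral_of_le h, ← Phi_sub]
  · rw [Icc_eq_empty (not_le.mpr h)]
    simp

lemma integral_Ioi_phi (c : ℝ) : ∫ x in Ioi c, phi x = 1 - stdNormalCDF c := by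
  have := intervalIntegral.integral_Iic_add_Ioi (f := phi) (μ := volume) (b := c)
    integrable_phi.integrableOn integrable_phi.integrableOn
  rw [integral_phi, ← Phi_def] at this
  linarith

lemma gamma_Ioi (c : ℝ) :
    gaussianReal 0 1 (Ioi c) = ENNReal.ofReal (1 - stdNormalCDF c) := by
  rw [gamma_eq, integral_Ioi_phi]

lemma gamma_Iio (d : ℝ) :
    gaussianReal 0 1 (Iio d) = ENNReal.ofReal (stdNormalCDF d) := by
  rw [gamma_eq, ← integral_Iic_eq_integral_Iio, ← Phi_def]

lemma gamma_Ici_le (c : ℝ) :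
    gaussianReal 0 1 (Ici c) ≤ ENNReal.ofReal (1 - stdNormalCDF c) := by
  rw [gamma_eq, integral_Ici_eq_integral_Ioi, integral_Ioi_phi]

lemma gamma_Iic_le (d : ℝ) :
    gaussianReal 0 1 (Iic d) ≤ ENNReal.ofReal (stdNormalCDF d) :=
  le_of_eq (gamma_Iic d)

-- helper: from ofReal W ≤ ofReal X and 0 < W, deduce W ≤ X
lemma real_le_of_ofReal_le {W X : ℝ} (hW : 0 < W) (h : ENNReal.ofReal W ≤ ENNReal.ofReal X) :
    W ≤ X := by
  rcases ENNReal.ofReal_le_ofReal_iff'.mp h with h1 | h1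
  · exact h1
  · linarith

lemma toReal_ge_of_ofReal_le {X : ℝ} {m : ENNReal} (hm : m ≠ ⊤)
    (h : ENNReal.ofReal X ≤ m) : X ≤ m.toReal := by
  rcases le_or_gt X 0 with h0 | h0
  · exact h0.trans ENNReal.toReal_nonneg
  · have h2 := ENNReal.toReal_mono hm h
    rwa [ENNReal.toReal_ofReal h0.le] at h2

theorem component_bound {A U : Set ℝ} (hA : MeasurableSet A) (hU : IsOpen U)
    {ε : ℝ} (hε : 0 < ε)
    (hball : ∀ a ∈ A, Ioo (a - ε) (a + ε) ⊆ U)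
    {α : ℝ} (hwa : gaussianReal 0 1 A ≤ ENNReal.ofReal (stdNormalCDF α))
    {x : ℝ} (hx : x ∈ U) :
    ENNReal.ofReal (stdNormalCDF (α + ε)) * gaussianReal 0 1 (A ∩ connectedComponentIn U x)
      ≤ ENNReal.ofReal (stdNormalCDF α) * gaussianReal 0 1 (connectedComponentIn U x) := by
  set γm := gaussianReal 0 1 with hγm
  set C := connectedComponentIn U x with hC
  have hxC : x ∈ C := mem_connectedComponentIn hx
  have hCne : C.Nonempty := ⟨x, hxC⟩
  have hCsub : C ⊆ U := connectedComponentIn_subset _ _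
  have hord : OrdConnected C := (isPreconnected_connectedComponentIn).ordConnected
  have hballC : ∀ a ∈ A ∩ C, Ioo (a - ε) (a + ε) ⊆ C := by
    rintro a ⟨haA, haC⟩
    have h1 : C = connectedComponentIn U a := connectedComponentIn_eq haC
    rw [h1]
    exact isPreconnected_Ioo.subset_connectedComponentIn
      (show a ∈ Ioo (a - ε) (a + ε) by constructor <;> linarith) (hball a haA)
  set W := (γm (A ∩ C)).toReal with hW
  have hW0 : 0 ≤ W := ENNReal.toReal_nonneg
  have hACW : γm (A ∩ C) = ENNReal.ofReal W := (ENNReal.ofReal_toReal (gamma_ne_top _)).symm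
  have hWa : W ≤ stdNormalCDF α := by
    have h1 : γm (A ∩ C) ≤ γm A := measure_mono inter_subset_left
    have h2 := h1.trans hwa
    have := ENNReal.toReal_mono (by simp) h2
    rwa [ENNReal.toReal_ofReal (Phi_nonneg α)] at this
  set R := (γm C).toReal with hR
  have hR0 : 0 ≤ R := ENNReal.toReal_nonneg
  have hCR : γm C = ENNReal.ofReal R := (ENNReal.ofReal_toReal (gamma_ne_top _)).symm
  rw [hACW, hCR, ← ENNReal.ofReal_mul (Phi_nonneg _), ← ENNReal.ofReal_mul (Phi_nonneg _)]
  apply ENNReal.ofReal_le_ofReal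
  -- now a real inequality : stdNormalCDF (α+ε) * W ≤ stdNormalCDF α * R
  rcases eq_or_lt_of_le hW0 with hW0' | hWpos
  · rw [← hW0', mul_zero]
    exact mul_nonneg (Phi_nonneg α) hR0
  rw [mul_comm]
  -- case analysis on boundedness of C
  by_cases hbb : BddBelow C <;> by_cases hba : BddAbove C
  · -- bounded both sides
    set c := sInf C with hc
    set d := sSup C with hd
    have hsubIcc : A ∩ C ⊆ Icc (c + ε) (d - ε) := by
      rintro a haAC
      have h2 := hballC a haAC
      have hne : (Ioo (a - ε) (a + ε)).Nonempty := nonempty_Ioo.mpr (by linarith)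
      have hinf : c ≤ a - ε := by
        have := csInf_le_csInf hbb hne h2
        rwa [csInf_Ioo (by linarith)] at this
      have hsup : a + ε ≤ d := by
        have := csSup_le_csSup hba hne h2
        rwa [csSup_Ioo (by linarith)] at this
      exact ⟨by linarith, by linarith⟩
    have hWle : W ≤ stdNormalCDF (d - ε) - stdNormalCDF (c + ε) := by
      apply real_le_of_ofReal_le hWpos
      rw [← hACW]
      exact (measure_mono hsubIcc).trans (gamma_Icc_le _ _)
    have hIooC : Ioo c d ⊆ C := by
      intro y hy
      obtain ⟨c₁, hc₁C, hc₁⟩ := (csInf_lt_iff hbb hCne).mp hy.1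
      obtain ⟨c₂, hc₂C, hc₂⟩ := (lt_csSup_iff hba hCne).mp hy.2
      exact hord.out hc₁C hc₂C ⟨hc₁.le, hc₂.le⟩
    have hcd : c ≤ d := csInf_le_csSup hCne hbb hba
    have hRge : stdNormalCDF d - stdNormalCDF c ≤ R := by
      apply toReal_ge_of_ofReal_le (gamma_ne_top _)
      rw [← gamma_Ioo hcd]
      exact measure_mono hIooC
    calc W * stdNormalCDF (α + ε) ≤ stdNormalCDF α * (stdNormalCDF d - stdNormalCDF c) :=
          key_Ioo hε.le hW0 hWa hWle
      _ ≤ stdNormalCDF α * R := by nlinarith [Phi_pos α]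
  · -- bounded below only
    set c := sInf C with hc
    have hsubIci : A ∩ C ⊆ Ici (c + ε) := by
      rintro a haAC
      have h2 := hballC a haAC
      have hne : (Ioo (a - ε) (a + ε)).Nonempty := nonempty_Ioo.mpr (by linarith)
      have hinf : c ≤ a - ε := by
        have := csInf_le_csInf hbb hne h2
        rwa [csInf_Ioo (by linarith)] at this
      simp only [mem_Ici]; linarith
    have hWle : W ≤ 1 - stdNormalCDF (c + ε) := by
      apply real_le_of_ofReal_le hWpos
      rw [← hACW]
      exact (measure_mono hsubIci).trans (gamma_Ici_le _)
    have hIoiC : Ioi c ⊆ C := by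
      intro y hy
      obtain ⟨c₁, hc₁C, hc₁⟩ := (csInf_lt_iff hbb hCne).mp hy
      obtain ⟨c₂, hc₂C, hc₂⟩ := not_bddAbove_iff.mp hba y
      exact hord.out hc₁C hc₂C ⟨hc₁.le, hc₂.le⟩
    have hRge : 1 - stdNormalCDF c ≤ R := by
      apply toReal_ge_of_ofReal_le (gamma_ne_top _)
      rw [← gamma_Ioi]
      exact measure_mono hIoiC
    calc W * stdNormalCDF (α + ε) ≤ stdNormalCDF α * (1 - stdNormalCDF c) :=
          key_Ioi hε.le hW0 hWa hWle
      _ ≤ stdNormalCDF α * R := by nlinarith [Phi_pos α]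
  · -- bounded above only
    set d := sSup C with hd
    have hsubIic : A ∩ C ⊆ Iic (d - ε) := by
      rintro a haAC
      have h2 := hballC a haAC
      have hne : (Ioo (a - ε) (a + ε)).Nonempty := nonempty_Ioo.mpr (by linarith)
      have hsup : a + ε ≤ d := by
        have := csSup_le_csSup hba hne h2
        rwa [csSup_Ioo (by linarith)] at this
      simp only [mem_Iic]; linarith
    have hWle : W ≤ stdNormalCDF (d - ε) := by
      apply real_le_of_ofReal_le hWpos
      rw [← hACW]
      exact (measure_mono hsubIic).trans (gamma_Iic_le _)
    have hIioC : Iio d ⊆ C := by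
      intro y hy
      obtain ⟨c₂, hc₂C, hc₂⟩ := (lt_csSup_iff hba hCne).mp hy
      obtain ⟨c₁, hc₁C, hc₁⟩ := not_bddBelow_iff.mp hbb y
      exact hord.out hc₁C hc₂C ⟨hc₁.le, hc₂.le⟩
    have hRge : stdNormalCDF d ≤ R := by
      apply toReal_ge_of_ofReal_le (gamma_ne_top _)
      rw [← gamma_Iio]
      exact measure_mono hIioC
    calc W * stdNormalCDF (α + ε) ≤ stdNormalCDF α * stdNormalCDF d :=
          key_Iio hε.le hW0 hWa hWle
      _ ≤ stdNormalCDF α * R := by nlinarith [Phi_pos α]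
  · -- unbounded both sides
    have hunivC : (univ : Set ℝ) ⊆ C := by
      intro y _
      obtain ⟨c₁, hc₁C, hc₁⟩ := not_bddBelow_iff.mp hbb y
      obtain ⟨c₂, hc₂C, hc₂⟩ := not_bddAbove_iff.mp hba y
      exact hord.out hc₁C hc₂C ⟨hc₁.le, hc₂.le⟩
    have hRge : (1:ℝ) ≤ R := by
      apply toReal_ge_of_ofReal_le (gamma_ne_top _)
      rw [ENNReal.ofReal_one, ← gamma_univ]
      exact measure_mono hunivC
    calc W * stdNormalCDF (α + ε) ≤ stdNormalCDF α * 1 := key_univ hW0 hWa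
      _ ≤ stdNormalCDF α * R := by nlinarith [Phi_pos α]

theorem one_dim_gaussian_isoperimetric (A : Set ℝ) (hA : MeasurableSet A)
    (α : ℝ) (hα : ((gaussianReal 0 1) A).toReal = stdNormalCDF α)
    (ε : ℝ) (hε : 0 ≤ ε) :
    ENNReal.ofReal (stdNormalCDF (α + ε)) ≤
      gaussianReal 0 1 {x : ℝ | ∃ a ∈ A, |x - a| ≤ ε} := by
  set γm := gaussianReal 0 1 with hγm
  have hγA : γm A = ENNReal.ofReal (stdNormalCDF α) := by
    rw [← hα]
    exact (ENNReal.ofReal_toReal (gamma_ne_top _)).symm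
  rcases eq_or_lt_of_le hε with hε0 | hεpos
  · -- ε = 0
    have hε0' : ε = 0 := hε0.symm
    subst hε0'
    have hsub : A ⊆ {x : ℝ | ∃ a ∈ A, |x - a| ≤ 0} := by
      intro a ha
      exact ⟨a, ha, by simp⟩
    rw [add_zero, ← hγA]
    exact measure_mono hsub
  · -- ε > 0
    set U : Set ℝ := ⋃ a ∈ A, Ioo (a - ε) (a + ε) with hU
    have hUopen : IsOpen U := isOpen_biUnion (fun _ _ => isOpen_Ioo)
    have hball : ∀ a ∈ A, Ioo (a - ε) (a + ε) ⊆ U := fun a ha => subset_biUnion_of_mem (u := fun a => Ioo (a - ε) (a + ε)) ha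
    have hAU : A ⊆ U := fun a ha => hball a ha ⟨by linarith, by linarith⟩
    have hUAε : U ⊆ {x : ℝ | ∃ a ∈ A, |x - a| ≤ ε} := by
      intro y hy
      rw [mem_iUnion₂] at hy
      obtain ⟨a, ha, hy1, hy2⟩ := hy
      exact ⟨a, ha, abs_le.mpr ⟨by linarith, by linarith⟩⟩
    refine le_trans ?_ (measure_mono hUAε)
    -- countable family of components
    set T : Set (Set ℝ) := (fun q : ℚ => connectedComponentIn U (q : ℝ)) '' {q : ℚ | (q : ℝ) ∈ U}
      with hT
    have hTcount : T.Countable := (Set.to_countable _).image _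
    have hTmem : ∀ C ∈ T, ∃ x ∈ U, C = connectedComponentIn U x := by
      rintro C ⟨q, hq, rfl⟩
      exact ⟨q, hq, rfl⟩
    have hTdisj : T.PairwiseDisjoint id := by
      rintro C₁ h₁ C₂ h₂ hne
      obtain ⟨x₁, hx₁, rfl⟩ := hTmem _ h₁
      obtain ⟨x₂, hx₂, rfl⟩ := hTmem _ h₂
      rw [Function.onFun, disjoint_left]
      intro y hy₁ hy₂
      exact hne ((connectedComponentIn_eq hy₁).trans (connectedComponentIn_eq hy₂).symm)
    have hTmeas : ∀ C ∈ T, MeasurableSet C := by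
      intro C hC
      obtain ⟨x, hx, rfl⟩ := hTmem _ hC
      exact (hUopen.connectedComponentIn).measurableSet
    have hTunion : ⋃₀ T = U := by
      apply subset_antisymm
      · intro y hy
        obtain ⟨C, hC, hyC⟩ := hy
        obtain ⟨x, hx, rfl⟩ := hTmem _ hC
        exact connectedComponentIn_subset _ _ hyC
      · intro y hy
        have hopen : IsOpen (connectedComponentIn U y) := hUopen.connectedComponentIn
        have hyC : y ∈ connectedComponentIn U y := mem_connectedComponentIn hy
        obtain ⟨q, hq⟩ := Rat.denseRange_cast.exists_mem_open hopen ⟨y, hyC⟩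
        have hqU : (q : ℝ) ∈ U := connectedComponentIn_subset _ _ hq
        have heq : connectedComponentIn U y = connectedComponentIn U (q : ℝ) :=
          connectedComponentIn_eq hq
        exact ⟨connectedComponentIn U y, ⟨q, hqU, heq.symm⟩, hyC⟩
    -- measure of U as a sum over components
    have hγU : γm U = ∑' C : T, γm C := by
      rw [← hTunion, sUnion_eq_biUnion]
      exact measure_biUnion hTcount hTdisj hTmeas
    have hγA_sum : γm A = ∑' C : T, γm (A ∩ C) := by
      have h1 : A = ⋃ C ∈ T, A ∩ C := by
        rw [← inter_iUnion₂, ← sUnion_eq_biUnion, hTunion]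
        exact (inter_eq_left.mpr hAU).symm
      conv_lhs => rw [h1]
      apply measure_biUnion hTcount
      · exact fun C₁ h₁ C₂ h₂ hne =>
          ((hTdisj h₁ h₂ hne).mono inter_subset_right inter_subset_right)
      · exact fun C hC => hA.inter (hTmeas C hC)
    have hsum : ∑' C : T, ENNReal.ofReal (stdNormalCDF (α + ε)) * γm (A ∩ C)
        ≤ ∑' C : T, ENNReal.ofReal (stdNormalCDF α) * γm C := by
      apply ENNReal.tsum_le_tsum
      rintro ⟨C, hC⟩
      obtain ⟨x, hx, rfl⟩ := hTmem _ hC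
      exact component_bound hA hUopen hεpos hball (le_of_eq hγA) hx
    rw [ENNReal.tsum_mul_left, ENNReal.tsum_mul_left, ← hγA_sum, ← hγU, hγA] at hsum
    have h0 : ENNReal.ofReal (stdNormalCDF α) ≠ 0 := by
      simp only [ne_eq, ENNReal.ofReal_eq_zero, not_le]
      exact Phi_pos α
    have htop : ENNReal.ofReal (stdNormalCDF α) ≠ ⊤ := ENNReal.ofReal_ne_top
    rw [mul_comm (ENNReal.ofReal (stdNormalCDF (α + ε)))] at hsum
    exact (ENNReal.mul_le_mul_iff_right h0 htop).mp hsum
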